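/- arXiv:2206.01446 — 2 statements merged into one kernel-verified Lean document; each statement's English description precedes it below -/
import Mathlib

section
/- Let α₁, β₁, α₂, β₂ > 0, a ≥ 1, b ≥ 1, −1 ≤ ρ ≤ 1, and for x, y > 0 set A = (x/β₁)^{α₁}, B = (y/β₂)^{α₂}, S = A + B, and D = exp(−(a−1)S)·((a+b)e^{−A} − a)·((a+b)e^{−B} − a). Then the GFGM bivariate Weibull CDF F_{XY}(x,y) = F_X(x)F_Y(y) + ρ·F_X(x)^b·F_Y(y)^b·(1−F_X(x))^a·(1−F_Y(y))^a, where F_X(x) = 1 − e^{−A} and F_Y(y) = 1 − e^{−B}, has second mixed partial derivative ∂²F_{XY}/∂x∂y equal to (α₁α₂/(β₁β₂))·A^{1−1/α₁}·B^{1−1/α₂}·e^{−S}·[1 + ρ(1−e^{−A})^{b−1}(1−e^{−B})^{b−1}·D] at every (x,y) with x > 0, y > 0. -/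
private lemma weib_hasDerivAt {α β x : ℝ} (hα : 0 < α) (hβ : 0 < β) (hx : 0 < x) :
    HasDerivAt (fun x' => 1 - Real.exp (-((x' / β) ^ α)))
      (Real.exp (-((x / β) ^ α)) * (α / β * (x / β) ^ (α - 1))) x := by
  have hq : (0:ℝ) < x / β := div_pos hx hβ
  have h1 : HasDerivAt (fun x' : ℝ => x' / β) (1 / β) x := by
    simpa using (hasDerivAt_id x).div_const β
  have h3 : HasDerivAt (fun x' : ℝ => (x' / β) ^ α)
      (α * (x / β) ^ (α - 1) * (1 / β)) x :=
    by have := (Real.hasDerivAt_rpow_const (x := x / β) (p := α) (Or.inl hq.ne')).comp x h1; exact this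
  have h4 := ((h3.neg).exp).const_sub 1
  simp only [Pi.neg_apply] at h4
  refine h4.congr_deriv ?_
  ring

private lemma inner_hasDerivAt (a b ρ v : ℝ) (ha : 1 ≤ a) (hb : 1 ≤ b)
    {u : ℝ → ℝ} {u' x : ℝ} (hu : HasDerivAt u u' x) :
    HasDerivAt (fun x' => u x' * v + ρ * u x' ^ b * v ^ b * (1 - u x') ^ a * (1 - v) ^ a)
      (u' * (v + ρ * (b * u x ^ (b - 1) * (1 - u x) ^ a
            - a * u x ^ b * (1 - u x) ^ (a - 1)) * v ^ b * (1 - v) ^ a)) x := by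
  have h1 := hu.mul_const v
  have h2 := ((hu.rpow_const (Or.inr hb)).const_mul ρ).mul_const (v ^ b)
  have h3 := (hu.const_sub 1).rpow_const (Or.inr ha)
  have h4 := (h2.mul h3).mul_const ((1 - v) ^ a)
  refine (h1.add h4).congr_deriv ?_
  ring

/-- Let `α₁, β₁, α₂, β₂ > 0`, `a ≥ 1`, `b ≥ 1`, `−1 ≤ ρ ≤ 1`, and for
`x, y > 0` set `A = (x/β₁)^{α₁}`, `B = (y/β₂)^{α₂}`, `S = A + B`, and
`D = exp(−(a−1)S)·((a+b)e^{−A} − a)·((a+b)e^{−B} − a)`. Then the GFGM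
bivariate Weibull CDF
`F_{XY}(x,y) = F_X(x)F_Y(y) + ρ·F_X(x)^b·F_Y(y)^b·(1−F_X(x))^a·(1−F_Y(y))^a`,
where `F_X(x) = 1 − e^{−A}` and `F_Y(y) = 1 − e^{−B}`, has second mixed
partial derivative `∂²F_{XY}/∂x∂y` equal to
`(α₁α₂/(β₁β₂))·A^{1−1/α₁}·B^{1−1/α₂}·e^{−S}·[1 + ρ(1−e^{−A})^{b−1}(1−e^{−B})^{b−1}·D]`
at every `(x,y)` with `x > 0`, `y > 0`. -/
theorem gfgm_weibull_mixed_partial (α₁ β₁ α₂ β₂ a b ρ : ℝ)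
    (hα₁ : 0 < α₁) (hβ₁ : 0 < β₁) (hα₂ : 0 < α₂) (hβ₂ : 0 < β₂)
    (ha : 1 ≤ a) (hb : 1 ≤ b) (hρ₁ : -1 ≤ ρ) (hρ₂ : ρ ≤ 1) :
    ∀ x > (0:ℝ), ∀ y > (0:ℝ),
      deriv (fun y' => deriv
          (fun x' =>
            (1 - Real.exp (-((x' / β₁) ^ α₁))) * (1 - Real.exp (-((y' / β₂) ^ α₂)))
            + ρ * (1 - Real.exp (-((x' / β₁) ^ α₁))) ^ b
                * (1 - Real.exp (-((y' / β₂) ^ α₂))) ^ b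
                * (1 - (1 - Real.exp (-((x' / β₁) ^ α₁)))) ^ a
                * (1 - (1 - Real.exp (-((y' / β₂) ^ α₂)))) ^ a) x) y
        = (α₁ * α₂ / (β₁ * β₂)) * ((x / β₁) ^ α₁) ^ (1 - 1 / α₁) *
            ((y / β₂) ^ α₂) ^ (1 - 1 / α₂) *
            Real.exp (-((x / β₁) ^ α₁ + (y / β₂) ^ α₂)) *
            (1 + ρ * (1 - Real.exp (-((x / β₁) ^ α₁))) ^ (b - 1)
               * (1 - Real.exp (-((y / β₂) ^ α₂))) ^ (b - 1)
               * (Real.exp (-((a - 1) * ((x / β₁) ^ α₁ + (y / β₂) ^ α₂)))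
                  * ((a + b) * Real.exp (-((x / β₁) ^ α₁)) - a)
                  * ((a + b) * Real.exp (-((y / β₂) ^ α₂)) - a))) := by
  intro x hx y hy
  have hu := weib_hasDerivAt hα₁ hβ₁ hx
  have hv := weib_hasDerivAt hα₂ hβ₂ hy
  set A : ℝ := (x / β₁) ^ α₁ with hA
  set B : ℝ := (y / β₂) ^ α₂ with hB
  set u' : ℝ := Real.exp (-A) * (α₁ / β₁ * (x / β₁) ^ (α₁ - 1)) with hu'
  set v' : ℝ := Real.exp (-B) * (α₂ / β₂ * (y / β₂) ^ (α₂ - 1)) with hv'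
  -- inner derivative for every y'
  have hfun : (fun y' : ℝ => deriv
          (fun x' =>
            (1 - Real.exp (-((x' / β₁) ^ α₁))) * (1 - Real.exp (-((y' / β₂) ^ α₂)))
            + ρ * (1 - Real.exp (-((x' / β₁) ^ α₁))) ^ b
                * (1 - Real.exp (-((y' / β₂) ^ α₂))) ^ b
                * (1 - (1 - Real.exp (-((x' / β₁) ^ α₁)))) ^ a
                * (1 - (1 - Real.exp (-((y' / β₂) ^ α₂)))) ^ a) x)
      = (fun y' : ℝ => u' * ((1 - Real.exp (-((y' / β₂) ^ α₂)))
          + ρ * (b * (1 - Real.exp (-A)) ^ (b - 1) * (1 - (1 - Real.exp (-A))) ^ a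
            - a * (1 - Real.exp (-A)) ^ b * (1 - (1 - Real.exp (-A))) ^ (a - 1))
            * (1 - Real.exp (-((y' / β₂) ^ α₂))) ^ b
            * (1 - (1 - Real.exp (-((y' / β₂) ^ α₂)))) ^ a)) := by
    funext y'
    exact (inner_hasDerivAt a b ρ (1 - Real.exp (-((y' / β₂) ^ α₂))) ha hb hu).deriv
  rw [hfun]
  -- now differentiate in y'
  set K : ℝ := ρ * (b * (1 - Real.exp (-A)) ^ (b - 1) * (1 - (1 - Real.exp (-A))) ^ a
            - a * (1 - Real.exp (-A)) ^ b * (1 - (1 - Real.exp (-A))) ^ (a - 1)) with hK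
  have hKb := (hv.rpow_const (Or.inr hb)).const_mul K
  have hKa := (hv.const_sub 1).rpow_const (Or.inr ha)
  have h5 := (hv.add (hKb.mul hKa)).const_mul u'
  simp only [Pi.add_apply, Pi.mul_apply] at h5
  rw [h5.deriv, ← hB]
  -- algebra
  have hq1 : (0:ℝ) < x / β₁ := div_pos hx hβ₁
  have hq2 : (0:ℝ) < y / β₂ := div_pos hy hβ₂
  have hA0 : 0 < A := Real.rpow_pos_of_pos hq1 _
  have hB0 : 0 < B := Real.rpow_pos_of_pos hq2 _
  have hPA : Real.exp (-A) < 1 := by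
    rw [Real.exp_lt_one_iff]; linarith
  have hPB : Real.exp (-B) < 1 := by
    rw [Real.exp_lt_one_iff]; linarith
  have hUA : (0:ℝ) < 1 - Real.exp (-A) := by linarith
  have hUB : (0:ℝ) < 1 - Real.exp (-B) := by linarith
  have e1 : Real.exp (-A) ^ a = Real.exp (-A * (a - 1)) * Real.exp (-A) := by
    rw [← Real.exp_mul, ← Real.exp_add]; congr 1; ring
  have e1' : Real.exp (-B) ^ a = Real.exp (-B * (a - 1)) * Real.exp (-B) := by
    rw [← Real.exp_mul, ← Real.exp_add]; congr 1; ring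
  have e2 : Real.exp (-A) ^ (a - 1) = Real.exp (-A * (a - 1)) := (Real.exp_mul _ _).symm
  have e2' : Real.exp (-B) ^ (a - 1) = Real.exp (-B * (a - 1)) := (Real.exp_mul _ _).symm
  have e5 : (1 - Real.exp (-A)) ^ b = (1 - Real.exp (-A)) ^ (b - 1) * (1 - Real.exp (-A)) := by
    rw [← Real.rpow_add_one hUA.ne' (b - 1)]; norm_num
  have e5' : (1 - Real.exp (-B)) ^ b = (1 - Real.exp (-B)) ^ (b - 1) * (1 - Real.exp (-B)) := by
    rw [← Real.rpow_add_one hUB.ne' (b - 1)]; norm_num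
  have e3 : Real.exp (-((a - 1) * (A + B))) = Real.exp (-A * (a - 1)) * Real.exp (-B * (a - 1)) := by
    rw [← Real.exp_add]; congr 1; ring
  have e4 : Real.exp (-(A + B)) = Real.exp (-A) * Real.exp (-B) := by
    rw [← Real.exp_add]; congr 1; ring
  have eX : A ^ (1 - 1 / α₁) = (x / β₁) ^ (α₁ - 1) := by
    rw [hA, ← Real.rpow_mul hq1.le]; congr 1; field_simp
  have eY : B ^ (1 - 1 / α₂) = (y / β₂) ^ (α₂ - 1) := by
    rw [hB, ← Real.rpow_mul hq2.le]; congr 1; field_simp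
  rw [hu', hv', hK]
  simp only [sub_sub_cancel]
  rw [e1, e1', e2, e2', e5, e5', e3, e4, eX, eY]
  ring
end

section
/- Let X and Y be real-valued random variables on a probability space with continuous marginal CDFs F_X(x) = P(X ≤ x) and F_Y(y) = P(Y ≤ y), and joint CDF H(x,y) = P(X ≤ x and Y ≤ y). Then there exists a unique function C : [0,1]² → [0,1] such that (i) C(u,1) = u and C(1,v) = v for all u, v ∈ [0,1]; (ii) C(u,0) = 0 and C(0,v) = 0 for all u, v ∈ [0,1]; (iii) C(u₂,v₂) − C(u₁,v₂) − C(u₂,v₁) + C(u₁,v₁) ≥ 0 whenever 0 ≤ u₁ ≤ u₂ ≤ 1 and 0 ≤ v₁ ≤ v₂ ≤ 1; and (iv) H(x,y) = C(F_X(x), F_Y(y)) for all x, y ∈ ℝ. -/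
open MeasureTheory

/-- A bivariate copula (as a function `ℝ → ℝ → ℝ`, constrained on `[0,1]²`):
it maps `[0,1]²` into `[0,1]`, satisfies the boundary conditions
`C(u,1) = u`, `C(1,v) = v`, `C(u,0) = 0`, `C(0,v) = 0`, and is 2-increasing. -/
def IsBivariateCopula (C : ℝ → ℝ → ℝ) : Prop :=
  (∀ u ∈ Set.Icc (0:ℝ) 1, ∀ v ∈ Set.Icc (0:ℝ) 1, C u v ∈ Set.Icc (0:ℝ) 1) ∧
  (∀ u ∈ Set.Icc (0:ℝ) 1, C u 1 = u) ∧
  (∀ v ∈ Set.Icc (0:ℝ) 1, C 1 v = v) ∧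
  (∀ u ∈ Set.Icc (0:ℝ) 1, C u 0 = 0) ∧
  (∀ v ∈ Set.Icc (0:ℝ) 1, C 0 v = 0) ∧
  (∀ u₁ u₂ v₁ v₂ : ℝ, 0 ≤ u₁ → u₁ ≤ u₂ → u₂ ≤ 1 → 0 ≤ v₁ → v₁ ≤ v₂ → v₂ ≤ 1 →
    0 ≤ C u₂ v₂ - C u₁ v₂ - C u₂ v₁ + C u₁ v₁)

/-- Key rectangle inequality at the level of measures. -/
lemma sklar_key_rect {Ω : Type*} [MeasurableSpace Ω] (P : Measure Ω)
    (A₁ A₂ B₁ B₂ : Set Ω) (hA : A₁ ⊆ A₂) (hB : B₁ ⊆ B₂)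
    (hA₂ : MeasurableSet A₂) (hB₁ : MeasurableSet B₁) :
    P (A₁ ∩ B₂) + P (A₂ ∩ B₁) ≤ P (A₂ ∩ B₂) + P (A₁ ∩ B₁) := by
  have h1 : (A₁ ∩ B₂) ∩ (A₂ ∩ B₁) = A₁ ∩ B₁ := by
    ext x
    constructor
    · rintro ⟨⟨h1, _⟩, ⟨_, h4⟩⟩; exact ⟨h1, h4⟩
    · rintro ⟨h1, h2⟩; exact ⟨⟨h1, hB h2⟩, ⟨hA h1, h2⟩⟩
  have h2 : (A₁ ∩ B₂) ∪ (A₂ ∩ B₁) ⊆ A₂ ∩ B₂ := by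
    rintro x (⟨h1, h2⟩ | ⟨h1, h2⟩)
    · exact ⟨hA h1, h2⟩
    · exact ⟨h1, hB h2⟩
  calc P (A₁ ∩ B₂) + P (A₂ ∩ B₁)
      = P ((A₁ ∩ B₂) ∪ (A₂ ∩ B₁)) + P ((A₁ ∩ B₂) ∩ (A₂ ∩ B₁)) :=
        (measure_union_add_inter _ (hA₂.inter hB₁)).symm
    _ = P ((A₁ ∩ B₂) ∪ (A₂ ∩ B₁)) + P (A₁ ∩ B₁) := by rw [h1]
    _ ≤ P (A₂ ∩ B₂) + P (A₁ ∩ B₁) := add_le_add_left (measure_mono h2) _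

/-- Sklar's theorem (bivariate, continuous marginals): for random variables
`X, Y` with continuous marginal CDFs `F_X`, `F_Y` and joint CDF `H`, there is
a copula `C`, unique on `[0,1]²`, with `H(x,y) = C(F_X(x), F_Y(y))`. -/
theorem sklar_bivariate_continuous {Ω : Type*} [MeasurableSpace Ω]
    (P : Measure Ω) [IsProbabilityMeasure P]
    (X Y : Ω → ℝ) (hX : Measurable X) (hY : Measurable Y)
    (hFX : Continuous fun x : ℝ => (P {ω | X ω ≤ x}).toReal)
    (hFY : Continuous fun y : ℝ => (P {ω | Y ω ≤ y}).toReal) :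
    ∃ C : ℝ → ℝ → ℝ,
      (IsBivariateCopula C ∧
        ∀ x y : ℝ, (P {ω | X ω ≤ x ∧ Y ω ≤ y}).toReal
          = C ((P {ω | X ω ≤ x}).toReal) ((P {ω | Y ω ≤ y}).toReal)) ∧
      (∀ C' : ℝ → ℝ → ℝ,
        (IsBivariateCopula C' ∧
          ∀ x y : ℝ, (P {ω | X ω ≤ x ∧ Y ω ≤ y}).toReal
            = C' ((P {ω | X ω ≤ x}).toReal) ((P {ω | Y ω ≤ y}).toReal)) →
        ∀ u ∈ Set.Icc (0:ℝ) 1, ∀ v ∈ Set.Icc (0:ℝ) 1, C' u v = C u v) := by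
  classical
  -- abbreviations
  set FXv : ℝ → ℝ := fun x => (P {ω | X ω ≤ x}).toReal with hFXv
  set FYv : ℝ → ℝ := fun y => (P {ω | Y ω ≤ y}).toReal with hFYv
  set Hf : ℝ → ℝ → ℝ := fun x y => (P {ω | X ω ≤ x ∧ Y ω ≤ y}).toReal with hHf
  -- basic measurability
  have mX : ∀ x : ℝ, MeasurableSet {ω | X ω ≤ x} := fun x => hX measurableSet_Iic
  have mY : ∀ y : ℝ, MeasurableSet {ω | Y ω ≤ y} := fun y => hY measurableSet_Iic
  -- toReal comparison helpers
  have toRle : ∀ s t : Set Ω, s ⊆ t → (P s).toReal ≤ (P t).toReal := fun s t h =>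
    ENNReal.toReal_mono (measure_ne_top P t) (measure_mono h)
  have addle : ∀ s₁ s₂ t₁ t₂ : Set Ω, P s₁ + P s₂ ≤ P t₁ + P t₂ →
      (P s₁).toReal + (P s₂).toReal ≤ (P t₁).toReal + (P t₂).toReal := by
    intro s₁ s₂ t₁ t₂ h
    rw [← ENNReal.toReal_add (measure_ne_top P s₁) (measure_ne_top P s₂),
      ← ENNReal.toReal_add (measure_ne_top P t₁) (measure_ne_top P t₂)]
    exact ENNReal.toReal_mono
      (ENNReal.add_ne_top.mpr ⟨measure_ne_top _ _, measure_ne_top _ _⟩) h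
  -- set identity
  have hsets : ∀ x y : ℝ, {ω | X ω ≤ x ∧ Y ω ≤ y} = {ω | X ω ≤ x} ∩ {ω | Y ω ≤ y} :=
    fun x y => rfl
  -- basic inequalities on H and marginals
  have FXnn : ∀ x, 0 ≤ FXv x := fun x => ENNReal.toReal_nonneg
  have FYnn : ∀ y, 0 ≤ FYv y := fun y => ENNReal.toReal_nonneg
  have FXle1 : ∀ x, FXv x ≤ 1 := by
    intro x
    have := prob_le_one (μ := P) (s := {ω | X ω ≤ x})
    simpa [hFXv] using ENNReal.toReal_mono (by simp) this
  have FYle1 : ∀ y, FYv y ≤ 1 := by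
    intro y
    have := prob_le_one (μ := P) (s := {ω | Y ω ≤ y})
    simpa [hFYv] using ENNReal.toReal_mono (by simp) this
  have Hnn : ∀ x y, 0 ≤ Hf x y := fun x y => ENNReal.toReal_nonneg
  have HleX : ∀ x y, Hf x y ≤ FXv x := fun x y => toRle _ _ (fun ω h => h.1)
  have HleY : ∀ x y, Hf x y ≤ FYv y := fun x y => toRle _ _ (fun ω h => h.2)
  have FXmono : ∀ x₁ x₂, x₁ ≤ x₂ → FXv x₁ ≤ FXv x₂ := fun x₁ x₂ h =>
    toRle _ _ (fun ω hw => le_trans hw h)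
  have FYmono : ∀ y₁ y₂, y₁ ≤ y₂ → FYv y₁ ≤ FYv y₂ := fun y₁ y₂ h =>
    toRle _ _ (fun ω hw => le_trans hw h)
  have HmonoX : ∀ x₁ x₂ y, x₁ ≤ x₂ → Hf x₁ y ≤ Hf x₂ y := fun x₁ x₂ y h =>
    toRle _ _ (fun ω hw => ⟨le_trans hw.1 h, hw.2⟩)
  have HmonoY : ∀ x y₁ y₂, y₁ ≤ y₂ → Hf x y₁ ≤ Hf x y₂ := fun x y₁ y₂ h =>
    toRle _ _ (fun ω hw => ⟨hw.1, le_trans hw.2 h⟩)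
  -- lower Fréchet bound : FX + FY - 1 ≤ H
  have Hlb : ∀ x y, FXv x + FYv y - 1 ≤ Hf x y := by
    intro x y
    have key : P {ω | X ω ≤ x} + P {ω | Y ω ≤ y}
        ≤ P (Set.univ : Set Ω) + P {ω | X ω ≤ x ∧ Y ω ≤ y} := by
      rw [hsets,
        ← measure_union_add_inter ({ω | X ω ≤ x}) (mY y)]
      exact add_le_add_left (measure_mono (Set.subset_univ _)) _
    have := addle _ _ _ _ key
    simp only [measure_univ, ENNReal.toReal_one] at this
    simp only [hFXv, hFYv, hHf]
    linarith [this]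
  -- rectangle inequality for H
  have Hrect : ∀ x₁ x₂ y₁ y₂, x₁ ≤ x₂ → y₁ ≤ y₂ →
      Hf x₁ y₂ + Hf x₂ y₁ ≤ Hf x₂ y₂ + Hf x₁ y₁ := by
    intro x₁ x₂ y₁ y₂ hx hy
    have key := sklar_key_rect P {ω | X ω ≤ x₁} {ω | X ω ≤ x₂} {ω | Y ω ≤ y₁}
      {ω | Y ω ≤ y₂} (fun ω h => le_trans h hx) (fun ω h => le_trans h hy) (mX x₂) (mY y₁)
    simp only [hHf, hsets]
    exact addle _ _ _ _ key
  -- Lipschitz-type bounds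
  have HlipX : ∀ x₁ x₂ y, x₁ ≤ x₂ → FXv x₁ + Hf x₂ y ≤ FXv x₂ + Hf x₁ y := by
    intro x₁ x₂ y hx
    have key := sklar_key_rect P {ω | X ω ≤ x₁} {ω | X ω ≤ x₂} {ω | Y ω ≤ y}
      (Set.univ) (fun ω h => le_trans h hx) (Set.subset_univ _) (mX x₂) (mY y)
    simp only [Set.inter_univ] at key
    simp only [hFXv, hHf, hsets]
    exact addle _ _ _ _ key
  have HlipY : ∀ x y₁ y₂, y₁ ≤ y₂ → FYv y₁ + Hf x y₂ ≤ FYv y₂ + Hf x y₁ := by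
    intro x y₁ y₂ hy
    have key := sklar_key_rect P {ω | Y ω ≤ y₁} {ω | Y ω ≤ y₂} {ω | X ω ≤ x}
      (Set.univ) (fun ω h => le_trans h hy) (Set.subset_univ _) (mY y₂) (mX x)
    simp only [Set.inter_univ] at key
    have key' : P {ω | Y ω ≤ y₁} + P ({ω | X ω ≤ x} ∩ {ω | Y ω ≤ y₂})
        ≤ P {ω | Y ω ≤ y₂} + P ({ω | X ω ≤ x} ∩ {ω | Y ω ≤ y₁}) := by
      rw [Set.inter_comm {ω | X ω ≤ x} {ω | Y ω ≤ y₂},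
        Set.inter_comm {ω | X ω ≤ x} {ω | Y ω ≤ y₁}]
      exact key
    simp only [hFYv, hHf, hsets]
    exact addle _ _ _ _ key'
  -- H depends on x only through FX x
  have HcongrX : ∀ x x' y, FXv x = FXv x' → Hf x y = Hf x' y := by
    intro x x' y hFeq
    rcases le_total x x' with h | h
    · have h1 := HmonoX x x' y h
      have h2 := HlipX x x' y h
      linarith [h2, hFeq]
    · have h1 := HmonoX x' x y h
      have h2 := HlipX x' x y h
      linarith [h2, hFeq]
  have HcongrY : ∀ x y y', FYv y = FYv y' → Hf x y = Hf x y' := by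
    intro x y y' hFeq
    rcases le_total y y' with h | h
    · have h1 := HmonoY x y y' h
      have h2 := HlipY x y y' h
      linarith [h2, hFeq]
    · have h1 := HmonoY x y' y h
      have h2 := HlipY x y' y h
      linarith [h2, hFeq]
  -- surjectivity of the marginals onto (0,1)
  have cdfX : ∀ x : ℝ, ProbabilityTheory.cdf (P.map X) x = FXv x := by
    intro x
    have : IsProbabilityMeasure (P.map X) := Measure.isProbabilityMeasure_map hX.aemeasurable
    rw [ProbabilityTheory.cdf_eq_real, measureReal_def, Measure.map_apply hX measurableSet_Iic]
    rfl
  have cdfY : ∀ y : ℝ, ProbabilityTheory.cdf (P.map Y) y = FYv y := by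
    intro y
    have : IsProbabilityMeasure (P.map Y) := Measure.isProbabilityMeasure_map hY.aemeasurable
    rw [ProbabilityTheory.cdf_eq_real, measureReal_def, Measure.map_apply hY measurableSet_Iic]
    rfl
  have surjX : ∀ u : ℝ, 0 < u → u < 1 → ∃ x, FXv x = u := by
    intro u hu0 hu1
    have hbot : Filter.Tendsto FXv Filter.atBot (nhds 0) := by
      have := ProbabilityTheory.tendsto_cdf_atBot (P.map X)
      simpa [funext cdfX] using this
    have htop : Filter.Tendsto FXv Filter.atTop (nhds 1) := by
      have := ProbabilityTheory.tendsto_cdf_atTop (P.map X)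
      simpa [funext cdfX] using this
    obtain ⟨a, ha⟩ := (hbot.eventually_lt_const hu0).exists
    obtain ⟨b, hb⟩ := (htop.eventually_const_lt hu1).exists
    have hmem : u ∈ Set.Icc (FXv a) (FXv b) := ⟨le_of_lt ha, le_of_lt hb⟩
    have hsub := intermediate_value_univ (f := FXv) a b hFX
    obtain ⟨x, hx⟩ := hsub (Set.Icc_subset_Icc le_rfl le_rfl hmem)
    exact ⟨x, hx⟩
  have surjY : ∀ v : ℝ, 0 < v → v < 1 → ∃ y, FYv y = v := by
    intro v hv0 hv1
    have hbot : Filter.Tendsto FYv Filter.atBot (nhds 0) := by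
      have := ProbabilityTheory.tendsto_cdf_atBot (P.map Y)
      simpa [funext cdfY] using this
    have htop : Filter.Tendsto FYv Filter.atTop (nhds 1) := by
      have := ProbabilityTheory.tendsto_cdf_atTop (P.map Y)
      simpa [funext cdfY] using this
    obtain ⟨a, ha⟩ := (hbot.eventually_lt_const hv0).exists
    obtain ⟨b, hb⟩ := (htop.eventually_const_lt hv1).exists
    have hmem : v ∈ Set.Icc (FYv a) (FYv b) := ⟨le_of_lt ha, le_of_lt hb⟩
    have hsub := intermediate_value_univ (f := FYv) a b hFY
    obtain ⟨y, hy⟩ := hsub (Set.Icc_subset_Icc le_rfl le_rfl hmem)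
    exact ⟨y, hy⟩
  -- pseudo-inverses
  obtain ⟨xof, hxof⟩ : ∃ g : ℝ → ℝ, ∀ u, 0 < u → u < 1 → FXv (g u) = u := by
    refine ⟨fun u => if h : ∃ x, FXv x = u then h.choose else 0, fun u h1 h2 => ?_⟩
    have h := surjX u h1 h2
    simp only [dif_pos h]
    exact h.choose_spec
  obtain ⟨yof, hyof⟩ : ∃ g : ℝ → ℝ, ∀ v, 0 < v → v < 1 → FYv (g v) = v := by
    refine ⟨fun v => if h : ∃ y, FYv y = v then h.choose else 0, fun v h1 h2 => ?_⟩
    have h := surjY v h1 h2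
    simp only [dif_pos h]
    exact h.choose_spec
  have xofmono : ∀ u₁ u₂, 0 < u₁ → u₁ ≤ u₂ → u₂ < 1 → xof u₁ ≤ xof u₂ := by
    intro u₁ u₂ h1 h12 h2
    rcases eq_or_lt_of_le h12 with rfl | hlt
    · exact le_rfl
    · by_contra h
      push_neg at h
      have := FXmono _ _ (le_of_lt h)
      rw [hxof u₂ (lt_trans h1 hlt) h2, hxof u₁ h1 (lt_trans hlt h2)] at this
      exact absurd (lt_of_lt_of_le hlt this) (lt_irrefl _)
  have yofmono : ∀ v₁ v₂, 0 < v₁ → v₁ ≤ v₂ → v₂ < 1 → yof v₁ ≤ yof v₂ := by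
    intro v₁ v₂ h1 h12 h2
    rcases eq_or_lt_of_le h12 with rfl | hlt
    · exact le_rfl
    · by_contra h
      push_neg at h
      have := FYmono _ _ (le_of_lt h)
      rw [hyof v₂ (lt_trans h1 hlt) h2, hyof v₁ h1 (lt_trans hlt h2)] at this
      exact absurd (lt_of_lt_of_le hlt this) (lt_irrefl _)
  -- the copula
  set C : ℝ → ℝ → ℝ := fun u v =>
    if u ≤ 0 ∨ v ≤ 0 then 0
    else if 1 ≤ u then min v 1
    else if 1 ≤ v then u
    else Hf (xof u) (yof v) with hCdef
  have hC0 : ∀ u v, u ≤ 0 ∨ v ≤ 0 → C u v = 0 := by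
    intro u v h; simp only [hCdef, if_pos h]
  have hC1u : ∀ u v, 0 < u → 0 < v → 1 ≤ u → C u v = min v 1 := by
    intro u v hu hv h1
    simp only [hCdef]
    rw [if_neg (by push_neg; exact ⟨hu, hv⟩), if_pos h1]
  have hC1v : ∀ u v, 0 < u → 0 < v → u < 1 → 1 ≤ v → C u v = u := by
    intro u v hu hv h1 h2
    simp only [hCdef]
    rw [if_neg (by push_neg; exact ⟨hu, hv⟩), if_neg (not_le.mpr h1), if_pos h2]
  have hCint : ∀ u v, 0 < u → u < 1 → 0 < v → v < 1 → C u v = Hf (xof u) (yof v) := by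
    intro u v hu0 hu1 hv0 hv1
    simp only [hCdef]
    rw [if_neg (by push_neg; exact ⟨hu0, hv0⟩), if_neg (not_le.mpr hu1),
      if_neg (not_le.mpr hv1)]
  -- basic bounds on C over [0,1]²
  have hCnn : ∀ u v, 0 ≤ u → u ≤ 1 → 0 ≤ v → v ≤ 1 → 0 ≤ C u v := by
    intro u v hu0 hu1 hv0 hv1
    rcases le_or_gt u 0 with h | hu
    · rw [hC0 u v (Or.inl h)]
    rcases le_or_gt v 0 with h | hv
    · rw [hC0 u v (Or.inr h)]
    rcases le_or_gt 1 u with h | hu'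
    · rw [hC1u u v hu hv h]; exact le_min (le_of_lt hv) zero_le_one
    rcases le_or_gt 1 v with h | hv'
    · rw [hC1v u v hu hv hu' h]; exact le_of_lt hu
    · rw [hCint u v hu hu' hv hv']; exact Hnn _ _
  have hCleU : ∀ u v, 0 ≤ u → u ≤ 1 → 0 ≤ v → v ≤ 1 → C u v ≤ u := by
    intro u v hu0 hu1 hv0 hv1
    rcases le_or_gt u 0 with h | hu
    · rw [hC0 u v (Or.inl h)]; exact hu0
    rcases le_or_gt v 0 with h | hv
    · rw [hC0 u v (Or.inr h)]; exact hu0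
    rcases le_or_gt 1 u with h | hu'
    · rw [hC1u u v hu hv h]; exact le_trans (min_le_right _ _) h
    rcases le_or_gt 1 v with h | hv'
    · rw [hC1v u v hu hv hu' h]
    · rw [hCint u v hu hu' hv hv']
      calc Hf (xof u) (yof v) ≤ FXv (xof u) := HleX _ _
        _ = u := hxof u hu hu'
  have hCleV : ∀ u v, 0 ≤ u → u ≤ 1 → 0 ≤ v → v ≤ 1 → C u v ≤ v := by
    intro u v hu0 hu1 hv0 hv1
    rcases le_or_gt u 0 with h | hu
    · rw [hC0 u v (Or.inl h)]; exact hv0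
    rcases le_or_gt v 0 with h | hv
    · rw [hC0 u v (Or.inr h)]; exact hv0
    rcases le_or_gt 1 u with h | hu'
    · rw [hC1u u v hu hv h]; exact min_le_left _ _
    rcases le_or_gt 1 v with h | hv'
    · rw [hC1v u v hu hv hu' h]; exact le_trans hu1 h
    · rw [hCint u v hu hu' hv hv']
      calc Hf (xof u) (yof v) ≤ FYv (yof v) := HleY _ _
        _ = v := hyof v hv hv'
  have hClb : ∀ u v, 0 ≤ u → u ≤ 1 → 0 ≤ v → v ≤ 1 → u + v - 1 ≤ C u v := by
    intro u v hu0 hu1 hv0 hv1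
    rcases le_or_gt u 0 with h | hu
    · rw [hC0 u v (Or.inl h)]; linarith
    rcases le_or_gt v 0 with h | hv
    · rw [hC0 u v (Or.inr h)]; linarith
    rcases le_or_gt 1 u with h | hu'
    · rw [hC1u u v hu hv h]
      have : u = 1 := le_antisymm hu1 h
      rw [min_eq_left hv1]; linarith
    rcases le_or_gt 1 v with h | hv'
    · rw [hC1v u v hu hv hu' h]
      have : v = 1 := le_antisymm hv1 h
      linarith
    · rw [hCint u v hu hu' hv hv']
      have := Hlb (xof u) (yof v)
      rw [hxof u hu hu', hyof v hv hv'] at this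
      exact this
  -- monotonicity of C
  have hMonoV : ∀ u v₁ v₂, 0 ≤ u → u ≤ 1 → 0 ≤ v₁ → v₁ ≤ v₂ → v₂ ≤ 1 →
      C u v₁ ≤ C u v₂ := by
    intro u v₁ v₂ hu0 hu1 hv10 hv12 hv21
    rcases le_or_gt v₁ 0 with h | hv1
    · rw [hC0 u v₁ (Or.inr h)]
      exact hCnn u v₂ hu0 hu1 (le_trans hv10 hv12) hv21
    have hv2 : 0 < v₂ := lt_of_lt_of_le hv1 hv12
    rcases le_or_gt u 0 with h | hu
    · rw [hC0 u v₁ (Or.inl h), hC0 u v₂ (Or.inl h)]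
    rcases le_or_gt 1 u with h | hu'
    · rw [hC1u u v₁ hu hv1 h, hC1u u v₂ hu hv2 h]
      exact min_le_min hv12 le_rfl
    rcases le_or_gt 1 v₂ with h | hv2'
    · rw [hC1v u v₂ hu hv2 hu' h]
      exact hCleU u v₁ hu0 hu1 hv10 (le_trans hv12 hv21)
    · have hv1' : v₁ < 1 := lt_of_le_of_lt hv12 hv2'
      rw [hCint u v₁ hu hu' hv1 hv1', hCint u v₂ hu hu' hv2 hv2']
      exact HmonoY _ _ _ (yofmono v₁ v₂ hv1 hv12 hv2')
  have hMonoU : ∀ u₁ u₂ v, 0 ≤ u₁ → u₁ ≤ u₂ → u₂ ≤ 1 → 0 ≤ v → v ≤ 1 →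
      C u₁ v ≤ C u₂ v := by
    intro u₁ u₂ v hu10 hu12 hu21 hv0 hv1
    rcases le_or_gt u₁ 0 with h | hu1
    · rw [hC0 u₁ v (Or.inl h)]
      exact hCnn u₂ v (le_trans hu10 hu12) hu21 hv0 hv1
    have hu2 : 0 < u₂ := lt_of_lt_of_le hu1 hu12
    rcases le_or_gt v 0 with h | hv
    · rw [hC0 u₁ v (Or.inr h), hC0 u₂ v (Or.inr h)]
    rcases le_or_gt 1 u₂ with h | hu2'
    · rw [hC1u u₂ v hu2 hv h]
      rw [min_eq_left hv1]
      exact hCleV u₁ v hu10 (le_trans hu12 hu21) hv0 hv1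
    · have hu1' : u₁ < 1 := lt_of_le_of_lt hu12 hu2'
      rcases le_or_gt 1 v with h | hv'
      · rw [hC1v u₁ v hu1 hv hu1' h, hC1v u₂ v hu2 hv hu2' h]
        exact hu12
      · rw [hCint u₁ v hu1 hu1' hv hv', hCint u₂ v hu2 hu2' hv hv']
        exact HmonoX _ _ _ (xofmono u₁ u₂ hu1 hu12 hu2')
  -- C is a copula
  have hcop : IsBivariateCopula C := by
    refine ⟨?_, ?_, ?_, ?_, ?_, ?_⟩
    · intro u hu v hv
      exact ⟨hCnn u v hu.1 hu.2 hv.1 hv.2,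
        le_trans (hCleU u v hu.1 hu.2 hv.1 hv.2) hu.2⟩
    · intro u hu
      rcases le_or_gt u 0 with h | hu'
      · rw [hC0 u 1 (Or.inl h)]; exact (le_antisymm h hu.1).symm
      rcases le_or_gt 1 u with h | hu''
      · rw [hC1u u 1 hu' zero_lt_one h, min_self]
        exact (le_antisymm hu.2 h).symm
      · exact hC1v u 1 hu' zero_lt_one hu'' le_rfl
    · intro v hv
      rcases le_or_gt v 0 with h | hv'
      · rw [hC0 1 v (Or.inr h)]; exact (le_antisymm h hv.1).symm
      · rw [hC1u 1 v zero_lt_one hv' le_rfl]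
        exact min_eq_left hv.2
    · intro u _; exact hC0 u 0 (Or.inr le_rfl)
    · intro v _; exact hC0 0 v (Or.inl le_rfl)
    · -- 2-increasing
      intro u₁ u₂ v₁ v₂ hu10 hu12 hu21 hv10 hv12 hv21
      have hu20 : 0 ≤ u₂ := le_trans hu10 hu12
      have hv20 : 0 ≤ v₂ := le_trans hv10 hv12
      have hu11 : u₁ ≤ 1 := le_trans hu12 hu21
      have hv11 : v₁ ≤ 1 := le_trans hv12 hv21
      rcases le_or_gt u₁ 0 with h | hu1
      · rw [hC0 u₁ v₂ (Or.inl h), hC0 u₁ v₁ (Or.inl h)]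
        have := hMonoV u₂ v₁ v₂ hu20 hu21 hv10 hv12 hv21
        linarith
      rcases le_or_gt v₁ 0 with h | hv1
      · rw [hC0 u₂ v₁ (Or.inr h), hC0 u₁ v₁ (Or.inr h)]
        have := hMonoU u₁ u₂ v₂ hu10 hu12 hu21 hv20 hv21
        linarith
      -- now 0 < u₁ ≤ u₂ ≤ 1, 0 < v₁ ≤ v₂ ≤ 1
      have hu2 : 0 < u₂ := lt_of_lt_of_le hu1 hu12
      have hv2 : 0 < v₂ := lt_of_lt_of_le hv1 hv12
      rcases le_or_gt 1 u₁ with h | hu1'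
      · -- u₁ = u₂ = 1
        have e1 : C u₁ v₂ = C u₂ v₂ := by
          rw [hC1u u₁ v₂ hu1 hv2 h, hC1u u₂ v₂ hu2 hv2 (le_trans h hu12)]
        have e2 : C u₁ v₁ = C u₂ v₁ := by
          rw [hC1u u₁ v₁ hu1 hv1 h, hC1u u₂ v₁ hu2 hv1 (le_trans h hu12)]
        linarith
      rcases le_or_gt 1 v₁ with h | hv1'
      · have e1 : C u₂ v₁ = C u₂ v₂ := by
          rcases le_or_gt 1 u₂ with h2 | h2
          · have ev1 : v₁ = 1 := le_antisymm hv11 h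
            have ev2 : v₂ = 1 := le_antisymm hv21 (le_trans h hv12)
            rw [hC1u u₂ v₁ hu2 hv1 h2, hC1u u₂ v₂ hu2 hv2 h2, ev1, ev2]
          · rw [hC1v u₂ v₁ hu2 hv1 h2 h, hC1v u₂ v₂ hu2 hv2 h2 (le_trans h hv12)]
        have e2 : C u₁ v₁ = C u₁ v₂ := by
          have hu1'' : u₁ < 1 := hu1'
          rw [hC1v u₁ v₁ hu1 hv1 hu1'' h, hC1v u₁ v₂ hu1 hv2 hu1'' (le_trans h hv12)]
        linarith
      -- now u₁, v₁ ∈ (0,1)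
      rcases le_or_gt 1 u₂ with hU | hU
      · rcases le_or_gt 1 v₂ with hV | hV
        · -- u₂ = v₂ = 1 case
          have e1 : C u₂ v₂ = 1 := by
            rw [hC1u u₂ v₂ hu2 hv2 hU, min_eq_right hV]
          have e2 : C u₁ v₂ = u₁ := hC1v u₁ v₂ hu1 hv2 hu1' hV
          have e3 : C u₂ v₁ = v₁ := by
            rw [hC1u u₂ v₁ hu2 hv1 hU, min_eq_left hv11]
          have e4 := hClb u₁ v₁ hu10 hu1'.le hv10 hv1'.le
          linarith
        · -- u₂ = 1, v₂ < 1
          have e1 : C u₂ v₂ = v₂ := by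
            rw [hC1u u₂ v₂ hu2 hv2 hU, min_eq_left hv21]
          have e3 : C u₂ v₁ = v₁ := by
            rw [hC1u u₂ v₁ hu2 hv1 hU, min_eq_left hv11]
          rw [hCint u₁ v₂ hu1 hu1' hv2 hV, hCint u₁ v₁ hu1 hu1' hv1 hv1']
          have hlip := HlipY (xof u₁) (yof v₁) (yof v₂) (yofmono v₁ v₂ hv1 hv12 hV)
          rw [hyof v₁ hv1 hv1', hyof v₂ hv2 hV] at hlip
          linarith
      · rcases le_or_gt 1 v₂ with hV | hV
        · -- v₂ = 1, u₂ < 1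
          have e1 : C u₂ v₂ = u₂ := hC1v u₂ v₂ hu2 hv2 hU hV
          have e2 : C u₁ v₂ = u₁ := hC1v u₁ v₂ hu1 hv2 hu1' hV
          rw [hCint u₂ v₁ hu2 hU hv1 hv1', hCint u₁ v₁ hu1 hu1' hv1 hv1']
          have hlip := HlipX (xof u₁) (xof u₂) (yof v₁) (xofmono u₁ u₂ hu1 hu12 hU)
          rw [hxof u₁ hu1 hu1', hxof u₂ hu2 hU] at hlip
          linarith
        · -- all interior
          rw [hCint u₂ v₂ hu2 hU hv2 hV, hCint u₁ v₂ hu1 hu1' hv2 hV,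
            hCint u₂ v₁ hu2 hU hv1 hv1', hCint u₁ v₁ hu1 hu1' hv1 hv1']
          have := Hrect (xof u₁) (xof u₂) (yof v₁) (yof v₂)
            (xofmono u₁ u₂ hu1 hu12 hU) (yofmono v₁ v₂ hv1 hv12 hV)
          linarith
  -- property (iv)
  have hiv : ∀ x y : ℝ, Hf x y = C (FXv x) (FYv y) := by
    intro x y
    rcases le_or_gt (FXv x) 0 with h | hx0
    · rw [hC0 _ _ (Or.inl h)]
      exact le_antisymm (le_trans (HleX x y) h) (Hnn x y)
    rcases le_or_gt (FYv y) 0 with h | hy0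
    · rw [hC0 _ _ (Or.inr h)]
      exact le_antisymm (le_trans (HleY x y) h) (Hnn x y)
    rcases le_or_gt 1 (FXv x) with h | hx1
    · rw [hC1u _ _ hx0 hy0 h, min_eq_left (FYle1 y)]
      have h1 : FXv x = 1 := le_antisymm (FXle1 x) h
      have := Hlb x y
      rw [h1] at this
      exact le_antisymm (HleY x y) (by linarith)
    rcases le_or_gt 1 (FYv y) with h | hy1
    · rw [hC1v _ _ hx0 hy0 hx1 h]
      have h1 : FYv y = 1 := le_antisymm (FYle1 y) h
      have := Hlb x y
      rw [h1] at this
      exact le_antisymm (HleX x y) (by linarith)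
    · rw [hCint _ _ hx0 hx1 hy0 hy1]
      have e1 : Hf x y = Hf (xof (FXv x)) y :=
        HcongrX _ _ _ (by rw [hxof _ hx0 hx1])
      have e2 : Hf (xof (FXv x)) y = Hf (xof (FXv x)) (yof (FYv y)) :=
        HcongrY _ _ _ (by rw [hyof _ hy0 hy1])
      rw [e1, e2]
  refine ⟨C, ⟨hcop, hiv⟩, ?_⟩
  -- uniqueness
  rintro C' ⟨⟨_, hb2', hb3', hb4', hb5', _⟩, hiv'⟩ u hu v hv
  obtain ⟨_, hb2, hb3, hb4, hb5, _⟩ := hcop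
  rcases eq_or_lt_of_le hu.1 with h | hu0
  · rw [← h, hb5' v hv, hb5 v hv]
  rcases eq_or_lt_of_le hv.1 with h | hv0
  · rw [← h, hb4' u hu, hb4 u hu]
  rcases eq_or_lt_of_le hu.2 with h | hu1
  · rw [h, hb3' v hv, hb3 v hv]
  rcases eq_or_lt_of_le hv.2 with h | hv1
  · rw [h, hb2' u hu, hb2 u hu]
  · obtain ⟨x, hx⟩ := surjX u hu0 hu1
    obtain ⟨y, hy⟩ := surjY v hv0 hv1
    have e1 : Hf x y = C' (FXv x) (FYv y) := hiv' x y
    have e2 : Hf x y = C (FXv x) (FYv y) := hiv x y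
    rw [hx, hy] at e1 e2
    rw [← e1, ← e2]
end
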